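/- Inexact preconditioned gradient descent converges linearly up to the noise level: let V : ℝ^n → ℝ be differentiable with ⟨∇V(f) − ∇V(f'), f − f'⟩ ≥ μ‖f − f'‖₂² and ‖∇V(f) − ∇V(f')‖₂ ≤ L‖f − f'‖₂ for all f, f' ∈ ℝ^n (with 0 < μ ≤ L), and let f* ∈ ℝ^n satisfy ∇V(f*) = 0. Let P : ℝ^n → ℝ^{n×n} assign to each f a matrix with ℓ²-operator norm ‖P(f)‖₂ ≤ M and satisfying ⟨f − f*, P(f) ∇V(f)⟩ ≥ m ⟨f − f*, ∇V(f)⟩ for constants 0 < m ≤ M. For a step size η ∈ (0, 2mμ/(L²M²)) and an arbitrary perturbation sequence (ξ_t) in ℝ^n, define f_{t+1} = f_t − η (P(f_t) ∇V(f_t) + ξ_t). Then for every t ≥ 0, ‖f_{t+1} − f*‖₂ ≤ κ ‖f_t − f*‖₂ + η ‖ξ_t‖₂, where κ = √(1 − 2μmη + η² M² L²) < 1. -/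

import Mathlib

set_option maxHeartbeats 1000000


open Matrix
open scoped RealInnerProductSpace Matrix.Norms.L2Operator

/-- The action of a real matrix on vectors of `EuclideanSpace`. -/
noncomputable def mulVecE {m n : Type*} [Fintype m] [Fintype n] [DecidableEq n]
    (A : Matrix m n ℝ) (v : EuclideanSpace ℝ n) : EuclideanSpace ℝ m :=
  Matrix.toEuclideanLin A v

lemma mulVecE_norm_le {m n : Type*} [Fintype m] [Fintype n] [DecidableEq n]
    (A : Matrix m n ℝ) (v : EuclideanSpace ℝ n) : ‖mulVecE A v‖ ≤ ‖A‖ * ‖v‖ :=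
  A.l2_opNorm_mulVec v

/-- **Linear convergence of inexact preconditioned gradient descent.**
Let `V` be differentiable, `μ`-strongly convex and `L`-smooth (expressed via its gradient),
with `∇V(f*) = 0`. Let `P(f)` satisfy `‖P(f)‖₂ ≤ M` and
`⟨f - f*, P(f)∇V(f)⟩ ≥ m ⟨f - f*, ∇V(f)⟩` with `0 < m ≤ M`. For a step size
`η ∈ (0, 2mμ/(L²M²))` and perturbations `ξ_t`, the iterates
`f_{t+1} = f_t - η (P(f_t)∇V(f_t) + ξ_t)` satisfy
`‖f_{t+1} - f*‖₂ ≤ κ‖f_t - f*‖₂ + η‖ξ_t‖₂` with `κ = √(1 - 2μmη + η²M²L²) < 1`. -/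
theorem inexact_preconditioned_gradient_descent_linear_convergence
    {n : ℕ} (V : EuclideanSpace ℝ (Fin n) → ℝ) (hV : Differentiable ℝ V)
    (μ L : ℝ) (hμ : 0 < μ) (hμL : μ ≤ L)
    (hstrong : ∀ f f' : EuclideanSpace ℝ (Fin n),
      μ * ‖f - f'‖ ^ 2 ≤ ⟪gradient V f - gradient V f', f - f'⟫)
    (hsmooth : ∀ f f' : EuclideanSpace ℝ (Fin n),
      ‖gradient V f - gradient V f'‖ ≤ L * ‖f - f'‖)
    (fstar : EuclideanSpace ℝ (Fin n)) (hfstar : gradient V fstar = 0)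
    (P : EuclideanSpace ℝ (Fin n) → Matrix (Fin n) (Fin n) ℝ)
    (m M : ℝ) (hm : 0 < m) (hmM : m ≤ M)
    (hPnorm : ∀ f, ‖P f‖ ≤ M)
    (hPlower : ∀ f : EuclideanSpace ℝ (Fin n),
      m * ⟪f - fstar, gradient V f⟫ ≤ ⟪f - fstar, mulVecE (P f) (gradient V f)⟫)
    (η : ℝ) (hη0 : 0 < η) (hη : η < 2 * m * μ / (L ^ 2 * M ^ 2))
    (ξ : ℕ → EuclideanSpace ℝ (Fin n))
    (f : ℕ → EuclideanSpace ℝ (Fin n))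
    (hf : ∀ t, f (t + 1) = f t - η • (mulVecE (P (f t)) (gradient V (f t)) + ξ t))
    (κ : ℝ) (hκ : κ = Real.sqrt (1 - 2 * μ * m * η + η ^ 2 * M ^ 2 * L ^ 2)) :
    κ < 1 ∧ ∀ t : ℕ, ‖f (t + 1) - fstar‖ ≤ κ * ‖f t - fstar‖ + η * ‖ξ t‖ := by
  have hL : 0 < L := lt_of_lt_of_le hμ hμL
  have hM : 0 < M := lt_of_lt_of_le hm hmM
  have hML : m * μ ≤ M * L := mul_le_mul hmM hμL hμ.le hM.le
  have hLM2 : 0 < L ^ 2 * M ^ 2 := by positivity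
  have hη' : η * (L ^ 2 * M ^ 2) < 2 * m * μ := (lt_div_iff₀ hLM2).mp hη
  have hML2 : (m * μ) ^ 2 ≤ (M * L) ^ 2 :=
    pow_le_pow_left₀ (by positivity) hML 2
  have hE0 : 0 ≤ 1 - 2 * μ * m * η + η ^ 2 * M ^ 2 * L ^ 2 := by
    nlinarith [sq_nonneg (η * (M ^ 2 * L ^ 2) - m * μ), hML2, hLM2]
  have hκ0 : 0 ≤ κ := hκ ▸ Real.sqrt_nonneg _
  have hκsq : κ ^ 2 = 1 - 2 * μ * m * η + η ^ 2 * M ^ 2 * L ^ 2 := by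
    rw [hκ, Real.sq_sqrt hE0]
  constructor
  · rw [hκ, Real.sqrt_lt' one_pos]
    nlinarith
  · intro t
    set e := f t - fstar with he
    set g := gradient V (f t) with hg
    set w := mulVecE (P (f t)) g with hw
    have hge : μ * ‖e‖ ^ 2 ≤ ⟪e, g⟫ := by
      have := hstrong (f t) fstar
      rw [hfstar, sub_zero] at this
      rwa [real_inner_comm] at this
    have hgn : ‖g‖ ≤ L * ‖e‖ := by
      have := hsmooth (f t) fstar
      rwa [hfstar, sub_zero] at this
    have hwn : ‖w‖ ≤ M * (L * ‖e‖) := by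
      calc ‖w‖ ≤ ‖P (f t)‖ * ‖g‖ := mulVecE_norm_le _ _
        _ ≤ M * (L * ‖e‖) :=
          mul_le_mul (hPnorm _) hgn (norm_nonneg _) hM.le
    have hew : m * (μ * ‖e‖ ^ 2) ≤ ⟪e, w⟫ :=
      le_trans (by nlinarith) (hPlower (f t))
    have key : ‖e - η • w‖ ^ 2 ≤ (κ * ‖e‖) ^ 2 := by
      have hexp : ‖e - η • w‖ ^ 2 = ‖e‖ ^ 2 - 2 * (η * ⟪e, w⟫) + η ^ 2 * ‖w‖ ^ 2 := by
        rw [norm_sub_sq_real, real_inner_smul_right, norm_smul, mul_pow]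
        rw [Real.norm_eq_abs, sq_abs]
      rw [hexp, mul_pow, hκsq]
      have hw2 : ‖w‖ ^ 2 ≤ (M * (L * ‖e‖)) ^ 2 :=
        pow_le_pow_left₀ (norm_nonneg _) hwn 2
      have h1 : 2 * η * (m * (μ * ‖e‖ ^ 2)) ≤ 2 * η * ⟪e, w⟫ :=
        mul_le_mul_of_nonneg_left hew (by positivity)
      have h2 : η ^ 2 * ‖w‖ ^ 2 ≤ η ^ 2 * (M * (L * ‖e‖)) ^ 2 :=
        mul_le_mul_of_nonneg_left hw2 (sq_nonneg η)
      linarith [h1, h2]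
    have hstep : ‖e - η • w‖ ≤ κ * ‖e‖ := by
      have := Real.sqrt_le_sqrt key
      rwa [Real.sqrt_sq (norm_nonneg _), Real.sqrt_sq (by positivity)] at this
    have hrw : f (t + 1) - fstar = (e - η • w) - η • ξ t := by
      rw [hf t, smul_add, he, hw, hg]; abel
    calc ‖f (t + 1) - fstar‖ = ‖(e - η • w) - η • ξ t‖ := by rw [hrw]
      _ ≤ ‖e - η • w‖ + ‖η • ξ t‖ := norm_sub_le _ _
      _ ≤ κ * ‖e‖ + η * ‖ξ t‖ := by
          rw [norm_smul, Real.norm_eq_abs, abs_of_pos hη0]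
          exact add_le_add_left hstep _
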